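/- In a connected Bratteli diagram in which every vertex has at least two outgoing edges, for every edge ordering the set of infinite paths that eventually follow only minimal edges is meager in the path space. -/

import Mathlib

open Topology Filter


/-- The path space of a Bratteli diagram: infinite sequences of edges, one per
level, with consecutive edges compatible. -/
abbrev BVPath (V E : ℕ → Type) (src : ∀ n, E n → V n) (tgt : ∀ n, E n → V (n + 1)) :
    Type :=
  {x : ∀ n, E n // ∀ n, tgt n (x n) = src (n + 1) (x (n + 1))}

/-- In a connected Bratteli diagram in which every vertex has at least two outgoing
edges, for every edge ordering the set of infinite paths that eventually follow only
minimal edges is meager in the path space. -/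
theorem eventually_minimal_paths_meager
    (V E : ℕ → Type)
    [∀ n, Fintype (V n)] [∀ n, Fintype (E n)] [∀ n, Nonempty (E n)]
    [∀ n, TopologicalSpace (E n)] [∀ n, DiscreteTopology (E n)]
    (src : ∀ n, E n → V n) (tgt : ∀ n, E n → V (n + 1))
    -- every vertex has at least two outgoing edges
    (hout : ∀ n (v : V n), ∃ e e' : E n, e ≠ e' ∧ src n e = v ∧ src n e' = v)
    -- every vertex after the root has at least one incoming edge
    (hin : ∀ n (v : V (n + 1)), ∃ e : E n, tgt n e = v)
    -- connectedness
    (hconn : ∀ n (v₁ v₂ : V n), ∃ m, n < m ∧ ∃ p₁ p₂ : ∀ k, E k,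
      src n (p₁ n) = v₁ ∧ src n (p₂ n) = v₂ ∧
      (∀ k, n ≤ k → k + 1 < m → tgt k (p₁ k) = src (k + 1) (p₁ (k + 1))) ∧
      (∀ k, n ≤ k → k + 1 < m → tgt k (p₂ k) = src (k + 1) (p₂ (k + 1))) ∧
      tgt (m - 1) (p₁ (m - 1)) = tgt (m - 1) (p₂ (m - 1)))
    -- an edge ordering: on the set of edges into each vertex, `ξ` is a bijection
    -- onto `{1, …, #edges into that vertex}`
    (ξ : ∀ n, E n → ℕ)
    (hξ : ∀ n (w : V (n + 1)),
      Set.BijOn (ξ n) {e : E n | tgt n e = w}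
        (Set.Icc 1 (Nat.card {e : E n // tgt n e = w}))) :
    IsMeagre {x : BVPath V E src tgt |
      ∃ N, ∀ k ≥ N, ∀ e' : E k, tgt k e' = tgt k (x.1 k) → ξ k (x.1 k) ≤ ξ k e'} := by
  classical
  -- a chosen outgoing edge from each vertex
  have pick : ∀ n (v : V n), {e : E n // src n e = v} := fun n v =>
    ⟨(hout n v).choose, (hout n v).choose_spec.choose_spec.2.1⟩
  -- ξ is injective on each fiber of tgt
  have ξinj : ∀ j (f₁ f₂ : E j), f₁ ≠ f₂ → tgt j f₁ = tgt j f₂ → ξ j f₁ ≠ ξ j f₂ := by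
    intro j f₁ f₂ hne htgt heq
    exact hne ((hξ j (tgt j f₂)).injOn htgt rfl heq)
  -- key lemma: from every vertex one can reach a non-minimal edge
  have key : ∀ (M : ℕ) (w : V M), ∃ j, M ≤ j ∧ ∃ q : ∀ k, E k,
      src M (q M) = w ∧
      (∀ k, M ≤ k → k + 1 ≤ j → tgt k (q k) = src (k + 1) (q (k + 1))) ∧
      ∃ f : E j, tgt j f = tgt j (q j) ∧ ξ j f < ξ j (q j) := by
    intro M w
    obtain ⟨e, e', hne, he, he'⟩ := hout M w
    by_cases htt : tgt M e = tgt M e'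
    · -- the two outgoing edges share a target
      rcases lt_or_gt_of_ne (ξinj M e e' hne htt) with h | h
      · refine ⟨M, le_rfl, Function.update (fun k => Classical.arbitrary (E k)) M e',
          ?_, ?_, e, ?_, ?_⟩
        · rw [Function.update_self]; exact he'
        · intro k hk hk1; omega
        · rw [Function.update_self]; exact htt
        · rw [Function.update_self]; exact h
      · refine ⟨M, le_rfl, Function.update (fun k => Classical.arbitrary (E k)) M e,
          ?_, ?_, e', ?_, ?_⟩
        · rw [Function.update_self]; exact he
        · intro k hk hk1; omega
        · rw [Function.update_self]; exact htt.symm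
        · rw [Function.update_self]; exact h
    · -- the two outgoing edges have different targets: use connectedness
      obtain ⟨m, hm, p₁, p₂, hp₁, hp₂, hc₁, hc₂, hmerge⟩ :=
        hconn (M + 1) (tgt M e) (tgt M e')
      have hne1 : p₁ (M + 1) ≠ p₂ (M + 1) := by
        intro heq; apply htt; rw [← hp₁, ← hp₂, heq]
      have hM1b : M + 1 ≤ m - 1 := by omega
      have hPj := Nat.findGreatest_spec (P := fun j => M + 1 ≤ j ∧ p₁ j ≠ p₂ j)
        (n := m - 1) hM1b ⟨le_rfl, hne1⟩
      have hjb := Nat.findGreatest_le (P := fun j => M + 1 ≤ j ∧ p₁ j ≠ p₂ j) (m - 1)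
      have hgreat := fun (k : ℕ)
        (h1 : Nat.findGreatest (fun j => M + 1 ≤ j ∧ p₁ j ≠ p₂ j) (m - 1) < k)
        (h2 : k ≤ m - 1) =>
        Nat.findGreatest_is_greatest (P := fun j => M + 1 ≤ j ∧ p₁ j ≠ p₂ j) h1 h2
      set j := Nat.findGreatest (fun j => M + 1 ≤ j ∧ p₁ j ≠ p₂ j) (m - 1) with hjdef
      have hMj : M + 1 ≤ j := hPj.1
      have hnej : p₁ j ≠ p₂ j := hPj.2
      have htj : tgt j (p₁ j) = tgt j (p₂ j) := by
        rcases eq_or_lt_of_le hjb with heq | hlt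
        · rw [heq]; exact hmerge
        · have hsame : p₁ (j + 1) = p₂ (j + 1) := by
            by_contra hcon
            exact hgreat (j + 1) (by omega) (by omega) ⟨by omega, hcon⟩
          rw [hc₁ j (by omega) (by omega), hc₂ j (by omega) (by omega), hsame]
      rcases lt_or_gt_of_ne (ξinj j (p₁ j) (p₂ j) hnej htj) with h | h
      · -- p₂ j is non-minimal: follow p₂, starting with e'
        refine ⟨j, by omega, Function.update p₂ M e', ?_, ?_, p₁ j, ?_, ?_⟩
        · rw [Function.update_self]; exact he'
        · intro k hk hk1
          rcases eq_or_lt_of_le hk with rfl | hlt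
          · rw [Function.update_self, Function.update_of_ne (by omega : M + 1 ≠ M)]
            exact hp₂.symm
          · rw [Function.update_of_ne (by omega), Function.update_of_ne (by omega)]
            exact hc₂ k (by omega) (by omega)
        · rw [Function.update_of_ne (by omega : j ≠ M)]; exact htj
        · rw [Function.update_of_ne (by omega : j ≠ M)]; exact h
      · -- p₁ j is non-minimal: follow p₁, starting with e
        refine ⟨j, by omega, Function.update p₁ M e, ?_, ?_, p₂ j, ?_, ?_⟩
        · rw [Function.update_self]; exact he
        · intro k hk hk1
          rcases eq_or_lt_of_le hk with rfl | hlt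
          · rw [Function.update_self, Function.update_of_ne (by omega : M + 1 ≠ M)]
            exact hp₁.symm
          · rw [Function.update_of_ne (by omega), Function.update_of_ne (by omega)]
            exact hc₁ k (by omega) (by omega)
        · rw [Function.update_of_ne (by omega : j ≠ M)]; exact htj.symm
        · rw [Function.update_of_ne (by omega : j ≠ M)]; exact h
  -- the pieces of the union
  set F : ℕ → Set (BVPath V E src tgt) := fun N =>
    {x | ∀ k ≥ N, ∀ e' : E k, tgt k e' = tgt k (x.1 k) → ξ k (x.1 k) ≤ ξ k e'} with hF
  have hclosed : ∀ N, IsClosed (F N) := by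
    intro N
    have hrw : F N = ⋂ k, ⋂ (_ : N ≤ k),
        (fun x : BVPath V E src tgt => x.1 k) ⁻¹'
          {e : E k | ∀ e' : E k, tgt k e' = tgt k e → ξ k e ≤ ξ k e'} := by
      ext x
      simp only [hF, Set.mem_setOf_eq, Set.mem_iInter, Set.mem_preimage, ge_iff_le]
    rw [hrw]
    refine isClosed_iInter fun k => isClosed_iInter fun _ => ?_
    exact IsClosed.preimage ((continuous_apply k).comp continuous_subtype_val)
      (isClosed_discrete _)
  have hint : ∀ N, interior (F N) = ∅ := by
    intro N
    rw [Set.eq_empty_iff_forall_notMem]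
    intro x hx
    have hmem : F N ∈ 𝓝 x := mem_interior_iff_mem_nhds.mp hx
    rw [mem_nhds_induced Subtype.val] at hmem
    obtain ⟨t, ht, hts⟩ := hmem
    rw [nhds_pi, Filter.mem_pi'] at ht
    obtain ⟨I, s, hs, hIt⟩ := ht
    set L := max N (I.sup id) with hL
    have hNL : N ≤ L := le_max_left _ _
    obtain ⟨j, hj, q, hqsrc, hqcompat, f, hf, hξf⟩ := key (L + 1) (src (L + 1) (x.1 (L + 1)))
    -- build the perturbed path
    obtain ⟨y, hy0, ystep⟩ : ∃ y : ∀ n, E n, y 0 = x.1 0 ∧ ∀ n, y (n + 1) =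
        if n + 1 ≤ L then x.1 (n + 1) else if n + 1 ≤ j then q (n + 1)
        else (pick (n + 1) (tgt n (y n))).1 :=
      ⟨fun n => Nat.rec (x.1 0) (fun n yn => if n + 1 ≤ L then x.1 (n + 1)
        else if n + 1 ≤ j then q (n + 1) else (pick (n + 1) (tgt n yn)).1) n,
        rfl, fun n => rfl⟩
    have hyle : ∀ n, n ≤ L → y n = x.1 n := by
      intro n hn
      cases n with
      | zero => exact hy0
      | succ n => rw [ystep, if_pos hn]
    have hyq : ∀ n, L + 1 ≤ n → n ≤ j → y n = q n := by
      intro n h1 h2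
      obtain ⟨n', rfl⟩ : ∃ n', n = n' + 1 := ⟨n - 1, by omega⟩
      rw [ystep, if_neg (by omega), if_pos h2]
    have hypath : ∀ n, tgt n (y n) = src (n + 1) (y (n + 1)) := by
      intro n
      rcases le_or_gt (n + 1) L with h | h
      · rw [hyle n (by omega), hyle (n + 1) h]; exact x.2 n
      · rcases le_or_gt (n + 1) j with h2 | h2
        · rw [ystep, if_neg (by omega), if_pos h2]
          rcases Nat.lt_or_ge n (L + 1) with hn | hn
          · have hnL : n = L := by omega
            subst hnL
            rw [hyle L le_rfl, hqsrc]
            exact x.2 L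
          · rw [hyq n hn (by omega)]
            exact hqcompat n hn h2
        · rw [ystep, if_neg (by omega), if_neg (by omega)]
          exact ((pick (n + 1) (tgt n (y n))).2).symm
    have hyI : ∀ i ∈ (I : Set ℕ), y i ∈ s i := by
      intro i hi
      have hiL : i ≤ L :=
        le_trans (Finset.le_sup (f := id) (Finset.mem_coe.mp hi)) (le_max_right _ _)
      rw [hyle i hiL]
      exact mem_of_mem_nhds (hs i)
    have hyF : (⟨y, hypath⟩ : BVPath V E src tgt) ∈ F N := hts (hIt hyI)
    have hcon : ξ j (y j) ≤ ξ j f :=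
      hyF j (by omega) f
        (show tgt j f = tgt j (y j) by rw [hyq j (by omega) le_rfl]; exact hf)
    rw [hyq j (by omega) le_rfl] at hcon
    omega
  have hrw : {x : BVPath V E src tgt |
      ∃ N, ∀ k ≥ N, ∀ e' : E k, tgt k e' = tgt k (x.1 k) → ξ k (x.1 k) ≤ ξ k e'} =
      ⋃ N, F N := by
    ext x
    simp only [Set.mem_setOf_eq, Set.mem_iUnion, hF]
  rw [hrw]
  apply isMeagre_iUnion
  intro N
  show (F N)ᶜ ∈ residual _
  exact residual_of_dense_open (hclosed N).isOpen_compl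
    (interior_eq_empty_iff_dense_compl.mp (hint N))
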